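/- Define a sequence of reals by a_1 = 1/2 and a_{k+1} = (2a_k − a_k³)/2 for k ≥ 1. Then for each fixed integer k ≥ 1, the threshold sequence satisfies lim_{N→∞} t_{N−k}^{(N)} / N = a_k. -/

import Mathlib

open Filter Real

/-- Auxiliary backwards recurrence: `tAux N n` equals `t_{N-1-n}^{(N)}`, where
`t_{N-1} = N/2` and `t_{i-1} = (s_i²(s_i+1) + 2(i² − s_i²) t_i) / (2 i (i+1))`
with `s_i = ⌊t_i⌋`. -/
noncomputable def tAux (N : ℕ) : ℕ → ℝ
  | 0 => (N : ℝ) / 2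
  | n + 1 =>
      let i : ℝ := (N : ℝ) - 1 - (n : ℝ)
      let t : ℝ := tAux N n
      let s : ℝ := (⌊t⌋ : ℝ)
      (s ^ 2 * (s + 1) + 2 * (i ^ 2 - s ^ 2) * t) / (2 * i * (i + 1))

/-- The equilibrium threshold sequence `t_i^{(N)}` of the two-sided secretary game,
for `0 ≤ i ≤ N-1`. -/
noncomputable def tgame (N i : ℕ) : ℝ := tAux N (N - 1 - i)

/-- The sequence `a_1 = 1/2`, `a_{k+1} = (2a_k − a_k³)/2`; here `aseq n = a_{n+1}`. -/
noncomputable def aseq : ℕ → ℝ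
  | 0 => 1 / 2
  | n + 1 => (2 * aseq n - (aseq n) ^ 3) / 2

lemma tAux_div_tendsto (n : ℕ) :
    Tendsto (fun N : ℕ => tAux N n / N) atTop (nhds (aseq n)) := by
  induction n with
  | zero =>
    have h : (fun N : ℕ => tAux N 0 / N) =ᶠ[atTop] fun _ => aseq 0 := by
      filter_upwards [eventually_ge_atTop 1] with N hN
      have hN' : (N : ℝ) ≠ 0 := by positivity
      simp only [tAux, aseq]
      field_simp
    exact (tendsto_const_nhds).congr' h.symm
  | succ n ih =>
    set a := aseq n with ha
    have h1N : Tendsto (fun N : ℕ => 1 / (N : ℝ)) atTop (nhds 0) :=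
      tendsto_one_div_atTop_nhds_zero_nat
    have hs : Tendsto (fun N : ℕ => ((⌊tAux N n⌋ : ℝ)) / N) atTop (nhds a) := by
      apply tendsto_of_tendsto_of_tendsto_of_le_of_le'
        (g := fun N : ℕ => tAux N n / N - 1 / N) (h := fun N : ℕ => tAux N n / N)
      · simpa using ih.sub h1N
      · exact ih
      · filter_upwards [eventually_ge_atTop 1] with N hN
        have hN0 : (0 : ℝ) < N := by exact_mod_cast hN
        rw [div_sub_div_same]
        gcongr
        exact (Int.sub_one_lt_floor _).le
      · filter_upwards [eventually_ge_atTop 1] with N hN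
        have hN0 : (0 : ℝ) < N := by exact_mod_cast hN
        gcongr
        exact Int.floor_le _
    have hi : Tendsto (fun N : ℕ => ((N : ℝ) - 1 - n) / N) atTop (nhds 1) := by
      have h : Tendsto (fun N : ℕ => 1 - (1 + (n : ℝ)) * (1 / N)) atTop (nhds (1 - (1 + n) * 0)) :=
        tendsto_const_nhds.sub (tendsto_const_nhds.mul h1N)
      have heq : (fun N : ℕ => 1 - (1 + (n : ℝ)) * (1 / N)) =ᶠ[atTop]
          fun N : ℕ => ((N : ℝ) - 1 - n) / N := by
        filter_upwards [eventually_ge_atTop 1] with N hN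
        have hN' : (N : ℝ) ≠ 0 := by positivity
        field_simp
        ring
      simpa using h.congr' heq
    have hnum : Tendsto (fun N : ℕ =>
        ((⌊tAux N n⌋ : ℝ) / N) ^ 2 * ((⌊tAux N n⌋ : ℝ) / N + 1 / N) +
          2 * ((((N : ℝ) - 1 - n) / N) ^ 2 - ((⌊tAux N n⌋ : ℝ) / N) ^ 2) * (tAux N n / N))
        atTop (nhds (a ^ 2 * (a + 0) + 2 * (1 ^ 2 - a ^ 2) * a)) :=
      ((hs.pow 2).mul (hs.add h1N)).add
        ((tendsto_const_nhds.mul ((hi.pow 2).sub (hs.pow 2))).mul ih)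
    have hden : Tendsto (fun N : ℕ =>
        2 * (((N : ℝ) - 1 - n) / N) * (((N : ℝ) - 1 - n) / N + 1 / N))
        atTop (nhds (2 * 1 * (1 + 0))) :=
      (tendsto_const_nhds.mul hi).mul (hi.add h1N)
    have hdiv := hnum.div hden (by norm_num)
    have hval : (a ^ 2 * (a + 0) + 2 * (1 ^ 2 - a ^ 2) * a) / (2 * 1 * (1 + 0))
        = aseq (n + 1) := by
      simp only [aseq, ← ha]; ring
    rw [hval] at hdiv
    refine hdiv.congr' ?_
    filter_upwards [eventually_ge_atTop (n + 2)] with N hN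
    have hNn : (n : ℝ) + 2 ≤ (N : ℝ) := by exact_mod_cast hN
    have hN0 : (N : ℝ) ≠ 0 := by
      have : 0 < N := by omega
      exact_mod_cast this.ne'
    have hi1 : (1 : ℝ) ≤ (N : ℝ) - 1 - n := by linarith
    have hi0 : ((N : ℝ) - 1 - n) ≠ 0 := by linarith
    have hi0' : ((N : ℝ) - 1 - n) + 1 ≠ 0 := by linarith
    show _ = tAux N (n + 1) / N
    simp only [tAux, Pi.div_apply]
    set t := tAux N n
    set s := ((⌊t⌋ : ℤ) : ℝ)
    field_simp

/-- For each fixed `k ≥ 1`, the threshold sequence satisfies `t_{N−k}^{(N)}/N → a_k`. -/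
theorem top_threshold_asymptotics (k : ℕ) (hk : 1 ≤ k) :
    Tendsto (fun N : ℕ => tgame N (N - k) / (N : ℝ)) atTop (nhds (aseq (k - 1))) := by
  refine (tAux_div_tendsto (k - 1)).congr' ?_
  filter_upwards [eventually_ge_atTop k] with N hN
  have : N - 1 - (N - k) = k - 1 := by omega
  rw [tgame, this]
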